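/- arXiv:1905.09623 — 4 statements merged into one kernel-verified Lean document; each statement's English description precedes it below -/
import Mathlib

section
/- Let β₁, β₂, β₃, β₄ ∈ ℚ be such that 2β_i ∈ ℤ for each i, β₁+β₂ ∈ ℤ, β₃+β₄ ∈ ℤ, β₃+β₄ ≠ 0, and such that the number 2S := (1/(2(β₃+β₄)))·[(β₁+β₂+β₃+β₄)² − 2(β₁²+β₂²+β₃²+β₄²) + 2(β₃−β₄)] is an integer. Then (S, T, U, V) = (S, S, 1/2, −1/2) is a solution of the system (S+T+U+V)² − 2S² − 2T² − 2U² − 2V² = −1 and 2α(S+T+U+V) − 4β₁S − 4β₂T − 4β₃U − 4β₄V − d/4 = 0, where α = β₁+β₂+β₃+β₄ and d = 4α² − 8(β₁²+β₂²+β₃²+β₄²); moreover the numbers β₁′ = β₁+S, β₂′ = β₂+S, β₃′ = β₃+1/2, β₄′ = β₄−1/2 satisfy 2β_i′ ∈ ℤ for each i, β₁′+β₂′ ∈ ℤ, and β₃′+β₄′ ∈ ℤ. -/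
/-- Let `β₁, β₂, β₃, β₄ ∈ ℚ` with `2βᵢ ∈ ℤ`, `β₁+β₂ ∈ ℤ`, `β₃+β₄ ∈ ℤ`, `β₃+β₄ ≠ 0`,
and suppose the number
`2S = (1/(2(β₃+β₄)))·[(β₁+β₂+β₃+β₄)² − 2(β₁²+β₂²+β₃²+β₄²) + 2(β₃−β₄)]`
is an integer.  Then `(S, T, U, V) = (S, S, 1/2, −1/2)` solves the system
`(S+T+U+V)² − 2S² − 2T² − 2U² − 2V² = −1` and
`2α(S+T+U+V) − 4β₁S − 4β₂T − 4β₃U − 4β₄V − d/4 = 0`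
(where `α = β₁+β₂+β₃+β₄` and `d = 4α² − 8(β₁²+β₂²+β₃²+β₄²)`); moreover
`β₁′ = β₁+S`, `β₂′ = β₂+S`, `β₃′ = β₃+1/2`, `β₄′ = β₄−1/2` satisfy `2βᵢ′ ∈ ℤ`,
`β₁′+β₂′ ∈ ℤ` and `β₃′+β₄′ ∈ ℤ`. -/
theorem sufficient_condition_solution
    (β₁ β₂ β₃ β₄ S : ℚ)
    (h1 : ∃ m : ℤ, 2 * β₁ = m) (h2 : ∃ m : ℤ, 2 * β₂ = m)
    (h3 : ∃ m : ℤ, 2 * β₃ = m) (h4 : ∃ m : ℤ, 2 * β₄ = m)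
    (h12 : ∃ m : ℤ, β₁ + β₂ = m) (h34 : ∃ m : ℤ, β₃ + β₄ = m)
    (hne : β₃ + β₄ ≠ 0)
    (hSdef : 2 * S = (1 / (2 * (β₃ + β₄))) *
      ((β₁ + β₂ + β₃ + β₄) ^ 2 - 2 * (β₁ ^ 2 + β₂ ^ 2 + β₃ ^ 2 + β₄ ^ 2)
        + 2 * (β₃ - β₄)))
    (hSint : ∃ m : ℤ, 2 * S = m) :
    ((S + S + 1/2 + (-1/2 : ℚ)) ^ 2
        - 2 * S ^ 2 - 2 * S ^ 2 - 2 * (1/2 : ℚ) ^ 2 - 2 * (-1/2 : ℚ) ^ 2 = -1 ∧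
      2 * (β₁ + β₂ + β₃ + β₄) * (S + S + 1/2 + (-1/2 : ℚ))
          - 4 * β₁ * S - 4 * β₂ * S - 4 * β₃ * (1/2) - 4 * β₄ * (-1/2 : ℚ)
          - (4 * (β₁ + β₂ + β₃ + β₄) ^ 2
              - 8 * (β₁ ^ 2 + β₂ ^ 2 + β₃ ^ 2 + β₄ ^ 2)) / 4 = 0) ∧
    ((∃ m : ℤ, 2 * (β₁ + S) = m) ∧ (∃ m : ℤ, 2 * (β₂ + S) = m) ∧
      (∃ m : ℤ, 2 * (β₃ + 1/2) = m) ∧ (∃ m : ℤ, 2 * (β₄ - 1/2) = m) ∧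
      (∃ m : ℤ, (β₁ + S) + (β₂ + S) = m) ∧
      (∃ m : ℤ, (β₃ + 1/2) + (β₄ - 1/2) = m)) := by
  obtain ⟨m1, hm1⟩ := h1
  obtain ⟨m2, hm2⟩ := h2
  obtain ⟨m3, hm3⟩ := h3
  obtain ⟨m4, hm4⟩ := h4
  obtain ⟨m12, hm12⟩ := h12
  obtain ⟨m34, hm34⟩ := h34
  obtain ⟨mS, hmS⟩ := hSint
  refine ⟨⟨by ring, ?_⟩, ?_, ?_, ?_, ?_, ?_, ?_⟩
  · have h := hSdef
    field_simp at h
    nlinarith [h]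
  · exact ⟨m1 + mS, by push_cast; linarith⟩
  · exact ⟨m2 + mS, by push_cast; linarith⟩
  · exact ⟨m3 + 1, by push_cast; linarith⟩
  · exact ⟨m4 - 1, by push_cast; linarith⟩
  · exact ⟨m12 + mS, by push_cast; linarith⟩
  · exact ⟨m34, by push_cast; linarith⟩
end

section
/- Let β₁, β₂, β₃, β₄ ∈ ℚ be such that 2β_i ∈ ℤ for each i, β₁+β₂ ∈ ℤ, β₃+β₄ ∈ ℤ, β₃+β₄ ≠ 0, and such that 2S := (1/(2(β₃+β₄)))·[(β₁+β₂+β₃+β₄)² − 2(β₁²+β₂²+β₃²+β₄²) + 2(β₃−β₄)] is an integer. Set α = β₁+β₂+β₃+β₄, H = (α, β₁, β₂, β₃, β₄), and M = (α + 2S, β₁+S, β₂+S, β₃+1/2, β₄−1/2). Then q(M−H) = q(M−2H) = −4, and the first coordinate of M equals the sum of its last four coordinates (so M is invariant under the involution θ*). -/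
noncomputable section

namespace KummerSublattice

/-- The quadratic form `q(α, β₁, β₂, β₃, β₄) = 4α² − 8(β₁² + β₂² + β₃² + β₄²)` on `ℚ⁵`:
the self-intersection form of the class `αL − β₁F₁ − β₂F₂ − β₃F₃ − β₄F₄`
(with `L² = 4`, `F_k² = −8`, all pairwise orthogonal). -/
def q (v : Fin 5 → ℚ) : ℚ :=
  4 * (v 0) ^ 2 - 8 * ((v 1) ^ 2 + (v 2) ^ 2 + (v 3) ^ 2 + (v 4) ^ 2)

/-- Under the hypotheses of Proposition 3.3 (`2βᵢ ∈ ℤ`, `β₁+β₂ ∈ ℤ`, `β₃+β₄ ∈ ℤ`,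
`β₃+β₄ ≠ 0` and `2S` an integer, where
`2S = (1/(2(β₃+β₄)))·[(β₁+β₂+β₃+β₄)² − 2(β₁²+β₂²+β₃²+β₄²) + 2(β₃−β₄)]`),
set `α = β₁+β₂+β₃+β₄`, `H = (α, β₁, β₂, β₃, β₄)` and
`M = (α+2S, β₁+S, β₂+S, β₃+1/2, β₄−1/2)`.  Then `q(M−H) = q(M−2H) = −4`, and the
first coordinate of `M` equals the sum of its last four coordinates
(so `M` is `θ*`-invariant). -/
theorem solution_gives_theta_invariant_class
    (β₁ β₂ β₃ β₄ S : ℚ)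
    (h1 : ∃ m : ℤ, 2 * β₁ = m) (h2 : ∃ m : ℤ, 2 * β₂ = m)
    (h3 : ∃ m : ℤ, 2 * β₃ = m) (h4 : ∃ m : ℤ, 2 * β₄ = m)
    (h12 : ∃ m : ℤ, β₁ + β₂ = m) (h34 : ∃ m : ℤ, β₃ + β₄ = m)
    (hne : β₃ + β₄ ≠ 0)
    (hSdef : 2 * S = (1 / (2 * (β₃ + β₄))) *
      ((β₁ + β₂ + β₃ + β₄) ^ 2 - 2 * (β₁ ^ 2 + β₂ ^ 2 + β₃ ^ 2 + β₄ ^ 2)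
        + 2 * (β₃ - β₄)))
    (hSint : ∃ m : ℤ, 2 * S = m)
    (α : ℚ) (hα : α = β₁ + β₂ + β₃ + β₄)
    (H M : Fin 5 → ℚ)
    (hH : H = ![α, β₁, β₂, β₃, β₄])
    (hM : M = ![α + 2 * S, β₁ + S, β₂ + S, β₃ + 1/2, β₄ - 1/2]) :
    q (M - H) = -4 ∧ q (M - (2 : ℚ) • H) = -4 ∧
      M 0 = M 1 + M 2 + M 3 + M 4 := by
  subst hα hH hM
  have key : 4 * S * (β₃ + β₄) =
      (β₁ + β₂ + β₃ + β₄) ^ 2 - 2 * (β₁ ^ 2 + β₂ ^ 2 + β₃ ^ 2 + β₄ ^ 2)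
        + 2 * (β₃ - β₄) := by
    field_simp at hSdef
    linarith
  refine ⟨?_, ?_, ?_⟩
  · simp [q, Pi.sub_apply]
    ring
  · simp [q, Pi.sub_apply, Pi.smul_apply, smul_eq_mul]
    linear_combination (-4 : ℚ) * key
  · simp
    ring

end KummerSublattice
end
end

section
/- Let k ≥ 1 be an integer. For H = (k+1, k/2, k/2, 1/2, 1/2), i.e. the class (k+1)L − (k/2)(F₁+F₂) − (1/2)(F₃+F₄), one has q(H) = 8k; and the coefficients β₁ = β₂ = k/2, β₃ = β₄ = 1/2 satisfy 2β_i ∈ ℤ, β₁+β₂ ∈ ℤ, β₃+β₄ ∈ ℤ, and (1/(2(β₃+β₄)))·[(β₁+β₂+β₃+β₄)² − 2(β₁²+β₂²+β₃²+β₄²) + 2(β₃−β₄)] = k ∈ ℤ. Moreover M = (2k+1, k, k, 1, 0), i.e. the class (2k+1)L − k(F₁+F₂) − F₃, satisfies q(M−H) = q(M−2H) = −4, and both H and M have first coordinate equal to the sum of their last four coordinates (θ*-invariance). -/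
noncomputable section

namespace KummerSublattice

/-- Let `k ≥ 1` be an integer.  For `H = (k+1, k/2, k/2, 1/2, 1/2)`, i.e. the class
`(k+1)L − (k/2)(F₁+F₂) − (1/2)(F₃+F₄)`, one has `q(H) = 8k`; the coefficients
`β₁ = β₂ = k/2`, `β₃ = β₄ = 1/2` satisfy `2βᵢ ∈ ℤ`, `β₁+β₂ ∈ ℤ`, `β₃+β₄ ∈ ℤ`, and
`(1/(2(β₃+β₄)))·[(β₁+β₂+β₃+β₄)² − 2(β₁²+β₂²+β₃²+β₄²) + 2(β₃−β₄)] = k ∈ ℤ`.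
Moreover `M = (2k+1, k, k, 1, 0)`, i.e. the class `(2k+1)L − k(F₁+F₂) − F₃`,
satisfies `q(M−H) = q(M−2H) = −4`, and both `H` and `M` have first coordinate equal
to the sum of their last four coordinates (`θ*`-invariance). -/
theorem key_example_degree_8k
    (k : ℤ) (hk : 1 ≤ k)
    (H M : Fin 5 → ℚ)
    (hH : H = ![(k : ℚ) + 1, (k : ℚ) / 2, (k : ℚ) / 2, 1/2, 1/2])
    (hM : M = ![2 * (k : ℚ) + 1, (k : ℚ), (k : ℚ), 1, 0]) :
    q H = 8 * (k : ℚ) ∧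
    (∃ m : ℤ, 2 * ((k : ℚ) / 2) = m) ∧ (∃ m : ℤ, 2 * (1/2 : ℚ) = m) ∧
    (∃ m : ℤ, (k : ℚ) / 2 + (k : ℚ) / 2 = m) ∧ (∃ m : ℤ, (1/2 : ℚ) + 1/2 = m) ∧
    (1 / (2 * ((1/2 : ℚ) + 1/2))) *
        (((k : ℚ) / 2 + (k : ℚ) / 2 + 1/2 + 1/2) ^ 2
          - 2 * (((k : ℚ) / 2) ^ 2 + ((k : ℚ) / 2) ^ 2 + (1/2 : ℚ) ^ 2 + (1/2 : ℚ) ^ 2)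
          + 2 * ((1/2 : ℚ) - 1/2)) = (k : ℚ) ∧
    q (M - H) = -4 ∧ q (M - (2 : ℚ) • H) = -4 ∧
    H 0 = H 1 + H 2 + H 3 + H 4 ∧ M 0 = M 1 + M 2 + M 3 + M 4 := by
  subst hH hM
  refine ⟨by simp [q]; ring, ⟨k, by push_cast; ring⟩, ⟨1, by norm_num⟩, ⟨k, by push_cast; ring⟩,
    ⟨1, by norm_num⟩, by push_cast; ring, by simp [q]; ring, by simp [q]; ring, by simp; ring, by simp; ring⟩

end KummerSublattice
end
end

section
/- Let β₁, β₂, β₃, β₄, β₁′, β₂′, β₃′, β₄′ ∈ ℚ satisfy: 2β_i ∈ ℤ and 2β_i′ ∈ ℤ for all i, β₁+β₂ ∈ ℤ, β₃+β₄ ∈ ℤ, β₁′+β₂′ ∈ ℤ, β₃′+β₄′ ∈ ℤ. Set α = β₁+β₂+β₃+β₄, α′ = β₁′+β₂′+β₃′+β₄′, H = (α, β₁, β₂, β₃, β₄), M = (α′, β₁′, β₂′, β₃′, β₄′). If q(M−H) = q(M−2H) = −4, then q(H) is divisible by 8 (equivalently, q(H)/4 is an even integer). In particular, when q(H)/4 is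 not an even integer, the associated system of Diophantine equations has no solution satisfying these half-integrality constraints. -/
noncomputable section

namespace KummerSublattice

/-- Let `β₁, β₂, β₃, β₄, β₁′, β₂′, β₃′, β₄′ ∈ ℚ` satisfy the half-integrality
constraints `2βᵢ ∈ ℤ`, `2βᵢ′ ∈ ℤ`, `β₁+β₂ ∈ ℤ`, `β₃+β₄ ∈ ℤ`, `β₁′+β₂′ ∈ ℤ`,
`β₃′+β₄′ ∈ ℤ`.  Set `α = β₁+β₂+β₃+β₄`, `α′ = β₁′+β₂′+β₃′+β₄′`,
`H = (α,β₁,β₂,β₃,β₄)`, `M = (α′,β₁′,β₂′,β₃′,β₄′)`.  If `q(M−H) = q(M−2H) = −4`,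
then `q(H)` is divisible by `8`, i.e. `q(H)/4` is an even integer.  (In particular,
when `q(H)/4` is not an even integer the associated system of Diophantine equations
has no solution satisfying these half-integrality constraints.) -/
theorem parity_obstruction
    (β₁ β₂ β₃ β₄ β₁' β₂' β₃' β₄' : ℚ)
    (h1 : ∃ m : ℤ, 2 * β₁ = m) (h2 : ∃ m : ℤ, 2 * β₂ = m)
    (h3 : ∃ m : ℤ, 2 * β₃ = m) (h4 : ∃ m : ℤ, 2 * β₄ = m)
    (h1' : ∃ m : ℤ, 2 * β₁' = m) (h2' : ∃ m : ℤ, 2 * β₂' = m)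
    (h3' : ∃ m : ℤ, 2 * β₃' = m) (h4' : ∃ m : ℤ, 2 * β₄' = m)
    (h12 : ∃ m : ℤ, β₁ + β₂ = m) (h34 : ∃ m : ℤ, β₃ + β₄ = m)
    (h12' : ∃ m : ℤ, β₁' + β₂' = m) (h34' : ∃ m : ℤ, β₃' + β₄' = m)
    (α α' : ℚ) (hα : α = β₁ + β₂ + β₃ + β₄) (hα' : α' = β₁' + β₂' + β₃' + β₄')
    (H M : Fin 5 → ℚ)
    (hH : H = ![α, β₁, β₂, β₃, β₄]) (hM : M = ![α', β₁', β₂', β₃', β₄'])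
    (hsol : q (M - H) = -4 ∧ q (M - (2 : ℚ) • H) = -4) :
    ∃ m : ℤ, q H = 8 * m := by
  obtain ⟨m1, hm1⟩ := h1
  obtain ⟨m3, hm3⟩ := h3
  obtain ⟨m1', hm1'⟩ := h1'
  obtain ⟨m3', hm3'⟩ := h3'
  obtain ⟨n12, hn12⟩ := h12
  obtain ⟨n34, hn34⟩ := h34
  obtain ⟨n12', hn12'⟩ := h12'
  obtain ⟨n34', hn34'⟩ := h34'
  obtain ⟨E1, E2⟩ := hsol
  subst hH hM hα hα'
  have hb2 : β₂ = (n12 : ℚ) - β₁ := by linarith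
  have hb4 : β₄ = (n34 : ℚ) - β₃ := by linarith
  have hb2' : β₂' = (n12' : ℚ) - β₁' := by linarith
  have hb4' : β₄' = (n34' : ℚ) - β₃' := by linarith
  have hb1 : β₁ = (m1 : ℚ) / 2 := by linarith
  have hb3 : β₃ = (m3 : ℚ) / 2 := by linarith
  have hb1' : β₁' = (m1' : ℚ) / 2 := by linarith
  have hb3' : β₃' = (m3' : ℚ) / 2 := by linarith
  subst hb2 hb4 hb2' hb4' hb1 hb3 hb1' hb3'
  refine ⟨(n12' - n12 + n34' - n34) * (n12 + n34) - (m1' - m1) * (m1 - n12)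
      - (n12' - n12) * (2 * n12 - m1) - (m3' - m3) * (m3 - n34)
      - (n34' - n34) * (2 * n34 - m3), ?_⟩
  simp only [q, Pi.sub_apply, Pi.smul_apply, smul_eq_mul, Matrix.cons_val_zero,
    Matrix.cons_val_one, Matrix.head_cons, Matrix.cons_val_two, Matrix.tail_cons,
    Matrix.cons_val_three, Matrix.cons_val_four] at E1 E2 ⊢
  push_cast
  linear_combination E2 - E1

end KummerSublattice
end
end
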